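/- Let δ ∈ (0,1), γ > 0, and define ξ on the upper half disc B₁⁺(0) in polar coordinates by ξ(r cosθ, r sinθ) = γ(θ − π/2)/log(1/δ) for r ≥ δ and ξ(r cosθ, r sinθ) = γ r (θ − π/2)/(δ log(1/δ)) for 0 < r < δ. Then ∫_{B₁⁺(0)} |∇ξ|² dx = πγ²/log(1/δ) + (πγ²/(log(1/δ))²)(1/2 + π²/24). -/

import Mathlib

open MeasureTheory

open Real Set

set_option maxHeartbeats 1000000


noncomputable def e2vec (a b : ℝ) : EuclideanSpace ℝ (Fin 2) :=
  (WithLp.equiv 2 (Fin 2 → ℝ)).symm ![a, b]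

lemma e2_norm (x : EuclideanSpace ℝ (Fin 2)) :
    ‖x‖ = Real.sqrt ((x 0)^2 + (x 1)^2) := by
  rw [EuclideanSpace.norm_eq]
  simp [Fin.sum_univ_two, Real.norm_eq_abs, sq_abs]

lemma innerSL_e2vec_apply (a b : ℝ) (y : EuclideanSpace ℝ (Fin 2)) :
    innerSL ℝ (e2vec a b) y = a * y 0 + b * y 1 := by
  simp [e2vec, PiLp.inner_apply, RCLike.inner_apply, Fin.sum_univ_two,
    WithLp.equiv_symm_apply, mul_comm]

lemma norm_innerSL_e2vec_sq (a b : ℝ) :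
    ‖innerSL ℝ (e2vec a b)‖^2 = a^2 + b^2 := by
  rw [innerSL_apply_norm, e2_norm]
  have h0 : (e2vec a b) 0 = a := rfl
  have h1 : (e2vec a b) 1 = b := rfl
  rw [h0, h1, Real.sq_sqrt (by positivity)]

lemma norm_pos_of_x1 (x : EuclideanSpace ℝ (Fin 2)) (hx1 : 0 < x 1) : 0 < ‖x‖ := by
  rw [e2_norm]; positivity

lemma abs_x0_lt_norm (x : EuclideanSpace ℝ (Fin 2)) (hx1 : 0 < x 1) : |x 0| < ‖x‖ := by
  rw [e2_norm, ← Real.sqrt_sq_eq_abs]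
  exact Real.sqrt_lt_sqrt (sq_nonneg _) (lt_add_of_pos_right _ (by positivity))

lemma hasFDerivAt_norm_e2 (x : EuclideanSpace ℝ (Fin 2)) (hx1 : 0 < x 1) :
    HasFDerivAt (fun y : EuclideanSpace ℝ (Fin 2) => ‖y‖)
      (innerSL ℝ (e2vec (x 0 / ‖x‖) (x 1 / ‖x‖))) x := by
  have hr : 0 < ‖x‖ := norm_pos_of_x1 x hx1
  have hs : x 0 * x 0 + x 1 * x 1 ≠ 0 := by nlinarith [sq_nonneg (x 0)]
  have h0 : HasFDerivAt (fun y : EuclideanSpace ℝ (Fin 2) => y 0)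
      (EuclideanSpace.proj (0 : Fin 2) : EuclideanSpace ℝ (Fin 2) →L[ℝ] ℝ) x := by
    exact (EuclideanSpace.proj (0 : Fin 2) : EuclideanSpace ℝ (Fin 2) →L[ℝ] ℝ).hasFDerivAt
  have h1 : HasFDerivAt (fun y : EuclideanSpace ℝ (Fin 2) => y 1)
      (EuclideanSpace.proj (1 : Fin 2) : EuclideanSpace ℝ (Fin 2) →L[ℝ] ℝ) x := by
    exact (EuclideanSpace.proj (1 : Fin 2) : EuclideanSpace ℝ (Fin 2) →L[ℝ] ℝ).hasFDerivAt
  have hsq := (h0.mul h0).add (h1.mul h1)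
  have hcomp := (Real.hasDerivAt_sqrt hs).comp_hasFDerivAt x hsq
  have hfun : (fun y : EuclideanSpace ℝ (Fin 2) => ‖y‖)
      = fun y => Real.sqrt (y 0 * y 0 + y 1 * y 1) := by
    funext y; rw [e2_norm]; ring_nf
  rw [hfun]
  refine hcomp.congr_fderiv ?_
  have hrs : Real.sqrt (x 0 * x 0 + x 1 * x 1) = ‖x‖ := by rw [e2_norm]; ring_nf
  refine ContinuousLinearMap.ext fun y => ?_
  simp only [innerSL_e2vec_apply, ContinuousLinearMap.smul_apply,
    ContinuousLinearMap.add_apply, PiLp.proj_apply, smul_eq_mul, hrs]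
  field_simp
  ring

lemma hasFDerivAt_theta_e2 (x : EuclideanSpace ℝ (Fin 2)) (hx1 : 0 < x 1) :
    HasFDerivAt (fun y : EuclideanSpace ℝ (Fin 2) => Real.arccos (y 0 / ‖y‖))
      (innerSL ℝ (e2vec (-(x 1) / ‖x‖^2) (x 0 / ‖x‖^2))) x := by
  have hr : 0 < ‖x‖ := norm_pos_of_x1 x hx1
  have habs : |x 0 / ‖x‖| < 1 := by
    rw [abs_div, abs_of_pos hr, div_lt_one hr]; exact abs_x0_lt_norm x hx1
  have ht1 : x 0 / ‖x‖ ≠ -1 := by intro h; rw [h] at habs; simp at habs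
  have ht2 : x 0 / ‖x‖ ≠ 1 := by intro h; rw [h] at habs; simp at habs
  have hsub : 1 - (x 0 / ‖x‖)^2 = (x 1 / ‖x‖)^2 := by
    have h2 : ‖x‖^2 = (x 0)^2 + (x 1)^2 := by
      rw [e2_norm, Real.sq_sqrt (by positivity)]
    field_simp
    nlinarith [h2]
  have hsqrt : Real.sqrt (1 - (x 0 / ‖x‖)^2) = x 1 / ‖x‖ := by
    rw [hsub, Real.sqrt_sq (by positivity)]
  have hn := hasFDerivAt_norm_e2 x hx1
  have hinv := (hasDerivAt_inv hr.ne').comp_hasFDerivAt x hn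
  have h0 : HasFDerivAt (fun y : EuclideanSpace ℝ (Fin 2) => y 0)
      (EuclideanSpace.proj (0 : Fin 2) : EuclideanSpace ℝ (Fin 2) →L[ℝ] ℝ) x := by
    exact (EuclideanSpace.proj (0 : Fin 2) : EuclideanSpace ℝ (Fin 2) →L[ℝ] ℝ).hasFDerivAt
  have ht' : HasFDerivAt (fun y : EuclideanSpace ℝ (Fin 2) => y 0 / ‖y‖)
      (x 0 • (-(‖x‖ ^ 2)⁻¹ • innerSL ℝ (e2vec (x 0 / ‖x‖) (x 1 / ‖x‖)))
        + ‖x‖⁻¹ • EuclideanSpace.proj (0 : Fin 2)) x := by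
    refine (h0.mul hinv).congr_of_eventuallyEq ?_
    exact Filter.Eventually.of_forall fun y => div_eq_mul_inv (y 0) ‖y‖
  have hA := (Real.hasDerivAt_arccos ht1 ht2).comp_hasFDerivAt x ht'
  refine hA.congr_fderiv ?_
  refine ContinuousLinearMap.ext fun y => ?_
  simp only [innerSL_e2vec_apply, ContinuousLinearMap.smul_apply,
    ContinuousLinearMap.add_apply, PiLp.proj_apply, smul_eq_mul, hsqrt,
    Function.comp]
  have h2 : ‖x‖^2 = (x 0)^2 + (x 1)^2 := by
    rw [e2_norm, Real.sq_sqrt (by positivity)]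
  have hx1' : x 1 ≠ 0 := hx1.ne'
  field_simp
  linear_combination (-(y 0)) * h2

lemma e2_norm_sq (x : EuclideanSpace ℝ (Fin 2)) (hx1 : 0 < x 1) :
    ‖x‖^2 = (x 0)^2 + (x 1)^2 := by
  rw [e2_norm, Real.sq_sqrt (by positivity)]

lemma hasFDerivAt_xi_outer (γ L : ℝ) (hL : L ≠ 0) (x : EuclideanSpace ℝ (Fin 2))
    (hx1 : 0 < x 1) :
    HasFDerivAt (fun y : EuclideanSpace ℝ (Fin 2) =>
        γ * (Real.arccos (y 0 / ‖y‖) - Real.pi/2) / L)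
      (innerSL ℝ (e2vec (γ * -(x 1) / (L * ‖x‖^2)) (γ * x 0 / (L * ‖x‖^2)))) x := by
  have hr : 0 < ‖x‖ := norm_pos_of_x1 x hx1
  have h0 := ((hasFDerivAt_theta_e2 x hx1).sub_const (Real.pi/2)).const_mul (γ/L)
  have h := h0.congr_of_eventuallyEq (Filter.Eventually.of_forall fun y =>
    by ring : (fun y : EuclideanSpace ℝ (Fin 2) =>
      γ * (Real.arccos (y 0 / ‖y‖) - Real.pi/2) / L) =ᶠ[nhds x] _)
  refine h.congr_fderiv ?_
  refine ContinuousLinearMap.ext fun y => ?_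
  simp only [innerSL_e2vec_apply, ContinuousLinearMap.coe_smul', Pi.smul_apply,
    ContinuousLinearMap.coe_sub', smul_eq_mul]
  field_simp

lemma hasFDerivAt_xi_inner (γ c : ℝ) (hc : c ≠ 0) (x : EuclideanSpace ℝ (Fin 2))
    (hx1 : 0 < x 1) :
    HasFDerivAt (fun y : EuclideanSpace ℝ (Fin 2) =>
        γ * ‖y‖ * (Real.arccos (y 0 / ‖y‖) - Real.pi/2) / c)
      (innerSL ℝ (e2vec
        (γ * ((Real.arccos (x 0 / ‖x‖) - Real.pi/2) * x 0 - x 1) / (c * ‖x‖))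
        (γ * ((Real.arccos (x 0 / ‖x‖) - Real.pi/2) * x 1 + x 0) / (c * ‖x‖)))) x := by
  have hr : 0 < ‖x‖ := norm_pos_of_x1 x hx1
  have h2 := e2_norm_sq x hx1
  have h0 := (((hasFDerivAt_norm_e2 x hx1).const_mul γ).mul
    ((hasFDerivAt_theta_e2 x hx1).sub_const (Real.pi/2))).const_mul c⁻¹
  have h := h0.congr_of_eventuallyEq (Filter.Eventually.of_forall fun y =>
    by simp only [Pi.mul_apply]; ring : (fun y : EuclideanSpace ℝ (Fin 2) =>
      γ * ‖y‖ * (Real.arccos (y 0 / ‖y‖) - Real.pi/2) / c) =ᶠ[nhds x] _)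
  refine h.congr_fderiv ?_
  refine ContinuousLinearMap.ext fun y => ?_
  simp only [innerSL_e2vec_apply, ContinuousLinearMap.coe_smul', Pi.smul_apply,
    ContinuousLinearMap.coe_sub', ContinuousLinearMap.add_apply,
    ContinuousLinearMap.smul_apply, smul_eq_mul]
  field_simp
  ring

lemma xi_pointwise (δ γ : ℝ) (hδ0 : 0 < δ) (hδ1 : δ < 1) (x : EuclideanSpace ℝ (Fin 2))
    (hx1 : 0 < x 1) (hne : ‖x‖ ≠ δ) :
    ‖fderiv ℝ (fun y : EuclideanSpace ℝ (Fin 2) =>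
        if δ ≤ ‖y‖ then γ * (Real.arccos (y 0 / ‖y‖) - Real.pi/2) / Real.log (1/δ)
        else γ * ‖y‖ * (Real.arccos (y 0 / ‖y‖) - Real.pi/2) / (δ * Real.log (1/δ))) x‖^2
    = if δ ≤ ‖x‖ then γ^2 / ((Real.log (1/δ))^2 * ‖x‖^2)
      else γ^2 / (δ^2 * (Real.log (1/δ))^2)
          * (1 + (Real.arccos (x 0 / ‖x‖) - Real.pi/2)^2) := by
  have hr : 0 < ‖x‖ := norm_pos_of_x1 x hx1
  have h2 := e2_norm_sq x hx1
  have hL : Real.log (1/δ) ≠ 0 := by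
    rw [one_div, Real.log_inv]
    exact neg_ne_zero.mpr (Real.log_neg hδ0 hδ1).ne
  by_cases hcase : δ ≤ ‖x‖
  · have hlt : δ < ‖x‖ := lt_of_le_of_ne hcase (Ne.symm hne)
    have hopen : IsOpen {y : EuclideanSpace ℝ (Fin 2) | δ < ‖y‖} :=
      isOpen_lt continuous_const continuous_norm
    have hev : (fun y : EuclideanSpace ℝ (Fin 2) =>
        if δ ≤ ‖y‖ then γ * (Real.arccos (y 0 / ‖y‖) - Real.pi/2) / Real.log (1/δ)
        else γ * ‖y‖ * (Real.arccos (y 0 / ‖y‖) - Real.pi/2) / (δ * Real.log (1/δ)))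
        =ᶠ[nhds x] (fun y => γ * (Real.arccos (y 0 / ‖y‖) - Real.pi/2) / Real.log (1/δ)) := by
      filter_upwards [hopen.mem_nhds hlt] with y hy
      exact if_pos (le_of_lt hy)
    rw [hev.fderiv_eq, (hasFDerivAt_xi_outer γ _ hL x hx1).fderiv, if_pos hcase,
      norm_innerSL_e2vec_sq]
    field_simp
    linear_combination (-γ^2) * h2
  · push_neg at hcase
    have hopen : IsOpen {y : EuclideanSpace ℝ (Fin 2) | ‖y‖ < δ} :=
      isOpen_lt continuous_norm continuous_const
    have hev : (fun y : EuclideanSpace ℝ (Fin 2) =>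
        if δ ≤ ‖y‖ then γ * (Real.arccos (y 0 / ‖y‖) - Real.pi/2) / Real.log (1/δ)
        else γ * ‖y‖ * (Real.arccos (y 0 / ‖y‖) - Real.pi/2) / (δ * Real.log (1/δ)))
        =ᶠ[nhds x] (fun y => γ * ‖y‖ * (Real.arccos (y 0 / ‖y‖) - Real.pi/2)
          / (δ * Real.log (1/δ))) := by
      filter_upwards [hopen.mem_nhds hcase] with y hy
      exact if_neg (not_le.mpr hy)
    rw [hev.fderiv_eq,
      (hasFDerivAt_xi_inner γ _ (mul_ne_zero hδ0.ne' hL) x hx1).fderiv,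
      if_neg (not_le.mpr hcase), norm_innerSL_e2vec_sq]
    set A := Real.arccos (x 0 / ‖x‖) - Real.pi/2 with hA
    set Lg := Real.log (1/δ) with hLg
    field_simp
    linear_combination (-(γ^2 * (1 + (Real.arccos (x 0 / ‖x‖) - Real.pi/2)^2))) * h2

theorem xi_dirichlet_energy (δ γ : ℝ) (hδ : δ ∈ Set.Ioo (0 : ℝ) 1) (hγ : 0 < γ) :
    let θ : EuclideanSpace ℝ (Fin 2) → ℝ := fun x => Real.arccos (x 0 / ‖x‖)
    let ξ : EuclideanSpace ℝ (Fin 2) → ℝ := fun x =>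
      if δ ≤ ‖x‖ then γ * (θ x - Real.pi / 2) / Real.log (1 / δ)
      else γ * ‖x‖ * (θ x - Real.pi / 2) / (δ * Real.log (1 / δ))
    let Bplus : Set (EuclideanSpace ℝ (Fin 2)) := {x | ‖x‖ < 1 ∧ 0 < x 1}
    (∫ x in Bplus, ‖fderiv ℝ ξ x‖ ^ 2) =
      Real.pi * γ ^ 2 / Real.log (1 / δ) +
        Real.pi * γ ^ 2 / (Real.log (1 / δ)) ^ 2 * (1 / 2 + Real.pi ^ 2 / 24) := by
  intro θ ξ Bplus
  obtain ⟨hδ0, hδ1⟩ := hδ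
  have hL : 0 < Real.log (1/δ) := by
    rw [one_div, Real.log_inv]
    linarith [Real.log_neg hδ0 hδ1]
  set L := Real.log (1/δ) with hLdef
  -- the a.e. pointwise value of the energy density
  set g : EuclideanSpace ℝ (Fin 2) → ℝ := fun x =>
    if δ ≤ ‖x‖ then γ^2 / (L^2 * ‖x‖^2)
    else γ^2 / (δ^2 * L^2) * (1 + (Real.arccos (x 0 / ‖x‖) - Real.pi/2)^2) with hgdef
  have hproj1 : Continuous (fun x : EuclideanSpace ℝ (Fin 2) => x 1) :=
    (EuclideanSpace.proj (1 : Fin 2) : EuclideanSpace ℝ (Fin 2) →L[ℝ] ℝ).continuous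
  have hBopen : IsOpen Bplus := by
    have : Bplus = {x : EuclideanSpace ℝ (Fin 2) | ‖x‖ < 1}
        ∩ {x : EuclideanSpace ℝ (Fin 2) | 0 < x 1} := rfl
    rw [this]
    exact (isOpen_lt continuous_norm continuous_const).inter
      (isOpen_lt continuous_const hproj1)
  have hBmeas : MeasurableSet Bplus := hBopen.measurableSet
  have step1 : (∫ x in Bplus, ‖fderiv ℝ ξ x‖ ^ 2) = ∫ x in Bplus, g x := by
    refine setIntegral_congr_ae hBmeas ?_
    have hsphere : volume {x : EuclideanSpace ℝ (Fin 2) | ‖x‖ = δ} = 0 := by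
      have hs : {x : EuclideanSpace ℝ (Fin 2) | ‖x‖ = δ} = Metric.sphere 0 δ := by
        ext x; simp [mem_sphere_zero_iff_norm]
      rw [hs]
      exact Measure.addHaar_sphere volume 0 δ
    have hae : ∀ᵐ x : EuclideanSpace ℝ (Fin 2), ‖x‖ ≠ δ := by
      rw [ae_iff]
      refine measure_mono_null ?_ hsphere
      intro x hx
      simpa using hx
    filter_upwards [hae] with x hxδ hxB
    have := xi_pointwise δ γ hδ0 hδ1 x hxB.2 hxδ
    simpa [ξ, θ, hgdef, hLdef] using this
  have step2 : (∫ x in Bplus, g x) =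
      ∫ p in polarCoord.target,
        p.1 • Set.indicator {p : ℝ × ℝ | Real.sqrt (p.1^2+p.2^2) < 1 ∧ 0 < p.2}
          (fun p => if δ ≤ Real.sqrt (p.1^2+p.2^2) then γ^2 / (L^2 * Real.sqrt (p.1^2+p.2^2)^2)
            else γ^2/(δ^2*L^2)
              * (1 + (Real.arccos (p.1 / Real.sqrt (p.1^2+p.2^2)) - Real.pi/2)^2))
          (polarCoord.symm p) := by
    set g2 : ℝ × ℝ → ℝ := fun p =>
      if δ ≤ Real.sqrt (p.1^2+p.2^2) then γ^2 / (L^2 * Real.sqrt (p.1^2+p.2^2)^2)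
      else γ^2/(δ^2*L^2)
        * (1 + (Real.arccos (p.1 / Real.sqrt (p.1^2+p.2^2)) - Real.pi/2)^2) with hg2def
    set S2 : Set (ℝ×ℝ) := {p | Real.sqrt (p.1^2+p.2^2) < 1 ∧ 0 < p.2} with hS2def
    set T : EuclideanSpace ℝ (Fin 2) ≃ᵐ ℝ × ℝ :=
      (MeasurableEquiv.toLp 2 (Fin 2 → ℝ)).symm.trans (MeasurableEquiv.finTwoArrow) with hTdef
    have hT : MeasurePreserving T := by
      exact ((volume_preserving_finTwoArrow ℝ).comp
        (EuclideanSpace.volume_preserving_symm_measurableEquiv_toLp (Fin 2)))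
    have hTx : ∀ x : EuclideanSpace ℝ (Fin 2), T x = (x 0, x 1) := fun _ => rfl
    have hind : ∀ x, Bplus.indicator g x = S2.indicator g2 (T x) := by
      intro x
      have hn := e2_norm x
      by_cases hx : x ∈ Bplus
      · rw [indicator_of_mem hx, hTx, indicator_of_mem]
        · show g x = g2 (x 0, x 1)
          simp only [hgdef, hg2def]
          rw [hn]
        · exact ⟨by rw [← hn]; exact hx.1, hx.2⟩
      · rw [indicator_of_notMem hx, hTx, indicator_of_notMem]
        intro hmem
        exact hx ⟨by rw [hn]; exact hmem.1, hmem.2⟩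
    calc ∫ x in Bplus, g x = ∫ x, Bplus.indicator g x := (integral_indicator hBmeas).symm
      _ = ∫ x, S2.indicator g2 (T x) := by simp_rw [hind]
      _ = ∫ p, S2.indicator g2 p := hT.integral_comp T.measurableEmbedding _
      _ = ∫ p in polarCoord.target, p.1 • S2.indicator g2 (polarCoord.symm p) :=
        (integral_comp_polarCoord_symm _).symm
  rw [step1, step2]
  set val : ℝ × ℝ → ℝ := fun p => if δ ≤ p.1 then γ^2/(L^2*p.1)
    else p.1 * (γ^2/(δ^2*L^2) * (1 + (p.2 - Real.pi/2)^2)) with hvaldef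
  have hpolar : EqOn (fun p : ℝ × ℝ =>
      p.1 • Set.indicator {p : ℝ × ℝ | Real.sqrt (p.1^2+p.2^2) < 1 ∧ 0 < p.2}
        (fun p => if δ ≤ Real.sqrt (p.1^2+p.2^2) then γ^2 / (L^2 * Real.sqrt (p.1^2+p.2^2)^2)
          else γ^2/(δ^2*L^2)
            * (1 + (Real.arccos (p.1 / Real.sqrt (p.1^2+p.2^2)) - Real.pi/2)^2))
        (polarCoord.symm p))
      (Set.indicator (Ioo (0:ℝ) 1 ×ˢ Ioo 0 Real.pi) val) polarCoord.target := by
    rintro ⟨r, t⟩ hp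
    obtain ⟨hr0, ht⟩ : (0 < r) ∧ t ∈ Ioo (-Real.pi) Real.pi := hp
    have hsymm : polarCoord.symm (r, t) = (r * cos t, r * sin t) := rfl
    have hsq : Real.sqrt ((r*cos t)^2 + (r*sin t)^2) = r := by
      have h1 : (r*cos t)^2 + (r*sin t)^2 = r^2 := by
        have h := Real.sin_sq_add_cos_sq t; nlinarith [h]
      rw [h1, Real.sqrt_sq hr0.le]
    simp only [hsymm]
    have hmem : ((r*cos t, r*sin t) ∈
        {p : ℝ × ℝ | Real.sqrt (p.1^2+p.2^2) < 1 ∧ 0 < p.2}) ↔ (r < 1 ∧ 0 < t) := by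
      simp only [mem_setOf_eq, hsq]
      constructor
      · rintro ⟨h1, h2⟩
        refine ⟨h1, ?_⟩
        by_contra hle
        push_neg at hle
        have hsin : Real.sin t ≤ 0 :=
          Real.sin_nonpos_of_nonpos_of_neg_pi_le hle ht.1.le
        nlinarith
      · rintro ⟨h1, h2⟩
        exact ⟨h1, mul_pos hr0 (Real.sin_pos_of_pos_of_lt_pi h2 ht.2)⟩
    by_cases hmem2 : r < 1 ∧ 0 < t
    · rw [indicator_of_mem (hmem.mpr hmem2),
        indicator_of_mem (show ((r,t) : ℝ × ℝ) ∈ Ioo (0:ℝ) 1 ×ˢ Ioo 0 Real.pi from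
          ⟨⟨hr0, hmem2.1⟩, ⟨hmem2.2, ht.2⟩⟩)]
      have harc : Real.arccos (r * cos t / r) = t := by
        rw [mul_comm, mul_div_assoc, div_self hr0.ne', mul_one]
        exact Real.arccos_cos hmem2.2.le ht.2.le
      simp only [hvaldef, hsq, harc, smul_eq_mul]
      by_cases hδr : δ ≤ r
      · rw [if_pos hδr, if_pos hδr]; field_simp
      · rw [if_neg hδr, if_neg hδr]
    · rw [indicator_of_notMem (fun h => hmem2 (hmem.mp h)),
        indicator_of_notMem (fun h : ((r,t) : ℝ × ℝ) ∈ Ioo (0:ℝ) 1 ×ˢ Ioo 0 Real.pi =>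
          hmem2 ⟨h.1.2, h.2.1⟩), smul_zero]
  rw [setIntegral_congr_fun polarCoord.open_target.measurableSet hpolar]
  have hsub : (Ioo (0:ℝ) 1 ×ˢ Ioo 0 Real.pi) ⊆ polarCoord.target := by
    rintro ⟨r,t⟩ ⟨h1, h2⟩
    exact ⟨h1.1, ⟨by linarith [h2.1, Real.pi_pos], h2.2⟩⟩
  rw [setIntegral_indicator (measurableSet_Ioo.prod measurableSet_Ioo),
    inter_eq_self_of_subset_right hsub]
  have hsplit : Ioo (0:ℝ) 1 ×ˢ Ioo 0 Real.pi
      = (Ioo (0:ℝ) δ ×ˢ Ioo 0 Real.pi) ∪ (Ico δ 1 ×ˢ Ioo 0 Real.pi) := by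
    rw [← union_prod, Ioo_union_Ico_eq_Ioo hδ0 hδ1.le]
  have hval_lower : EqOn val
      (fun p : ℝ×ℝ => (p.1 * (γ^2/(δ^2*L^2))) * (1 + (p.2 - Real.pi/2)^2))
      (Ioo (0:ℝ) δ ×ˢ Ioo 0 Real.pi) := by
    rintro ⟨r,t⟩ ⟨h1, _⟩
    simp only [hvaldef]
    rw [if_neg (not_le.mpr h1.2)]
    ring
  have hval_upper : EqOn val
      (fun p : ℝ×ℝ => (γ^2/(L^2*p.1)) * 1) (Ico δ 1 ×ˢ Ioo 0 Real.pi) := by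
    rintro ⟨r,t⟩ ⟨h1, _⟩
    simp only [hvaldef]
    rw [if_pos h1.1]
    ring
  have hIl : IntegrableOn (fun p : ℝ×ℝ =>
      (p.1 * (γ^2/(δ^2*L^2))) * (1 + (p.2 - Real.pi/2)^2)) (Ioo (0:ℝ) δ ×ˢ Ioo 0 Real.pi) := by
    rw [IntegrableOn, Measure.volume_eq_prod, ← Measure.prod_restrict]
    exact Integrable.mul_prod (f := fun r : ℝ => r * (γ^2/(δ^2*L^2)))
      (g := fun t : ℝ => 1 + (t - Real.pi/2)^2)
      (((continuous_id.mul continuous_const).integrableOn_Icc (a := 0) (b := δ)).mono_set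
        Ioo_subset_Icc_self)
      (((continuous_const.add ((continuous_id.sub continuous_const).pow 2)
        ).integrableOn_Icc (a := 0) (b := Real.pi)).mono_set Ioo_subset_Icc_self)
  have hIu : IntegrableOn (fun p : ℝ×ℝ => (γ^2/(L^2*p.1)) * 1)
      (Ico δ 1 ×ˢ Ioo 0 Real.pi) := by
    rw [IntegrableOn, Measure.volume_eq_prod, ← Measure.prod_restrict]
    have hcont : ContinuousOn (fun r : ℝ => γ^2/(L^2*r)) (Icc δ 1) := by
      refine continuousOn_const.div (continuousOn_const.mul continuousOn_id) ?_
      intro r hr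
      have h1 := hr.1
      have : 0 < r := lt_of_lt_of_le hδ0 h1
      positivity
    exact Integrable.mul_prod (f := fun r : ℝ => γ^2/(L^2*r)) (g := fun _ : ℝ => (1:ℝ))
      ((hcont.integrableOn_compact isCompact_Icc).mono_set Ico_subset_Icc_self)
      (integrableOn_const measure_Ioo_lt_top.ne)
  have hmeas_l : MeasurableSet (Ioo (0:ℝ) δ ×ˢ Ioo 0 Real.pi) :=
    measurableSet_Ioo.prod measurableSet_Ioo
  have hmeas_u : MeasurableSet (Ico δ 1 ×ˢ Ioo 0 Real.pi) :=
    measurableSet_Ico.prod measurableSet_Ioo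
  have hdisj : Disjoint (Ioo (0:ℝ) δ ×ˢ Ioo 0 Real.pi) (Ico δ 1 ×ˢ Ioo 0 Real.pi) := by
    rw [Set.disjoint_left]
    rintro ⟨r,t⟩ ⟨h1,_⟩ ⟨h2,_⟩
    exact absurd h2.1 (not_le.mpr h1.2)
  rw [hsplit, setIntegral_union hdisj hmeas_u
    (hIl.congr_fun hval_lower.symm hmeas_l) (hIu.congr_fun hval_upper.symm hmeas_u)]
  have hA : (∫ p in Ioo (0:ℝ) δ ×ˢ Ioo 0 Real.pi, val p)
      = (∫ r in Ioo (0:ℝ) δ, r * (γ^2/(δ^2*L^2)))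
        * (∫ t in Ioo (0:ℝ) Real.pi, (1 + (t - Real.pi/2)^2)) := by
    rw [setIntegral_congr_fun hmeas_l hval_lower, Measure.volume_eq_prod]
    exact setIntegral_prod_mul (fun r : ℝ => r * (γ^2/(δ^2*L^2)))
      (fun t : ℝ => 1 + (t - Real.pi/2)^2) _ _
  have hB : (∫ p in Ico δ 1 ×ˢ Ioo 0 Real.pi, val p)
      = (∫ r in Ico δ 1, γ^2/(L^2*r)) * (∫ t in Ioo (0:ℝ) Real.pi, (1:ℝ)) := by
    rw [setIntegral_congr_fun hmeas_u hval_upper, Measure.volume_eq_prod]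
    exact setIntegral_prod_mul (fun r : ℝ => γ^2/(L^2*r)) (fun _ : ℝ => (1:ℝ)) _ _
  rw [hA, hB]
  have e1 : ∫ r in Ioo (0:ℝ) δ, r * (γ^2/(δ^2*L^2)) = γ^2/(2*L^2) := by
    rw [← integral_Ioc_eq_integral_Ioo, ← intervalIntegral.integral_of_le hδ0.le,
      intervalIntegral.integral_mul_const, integral_id]
    field_simp
    ring
  have e2 : ∫ t in Ioo (0:ℝ) Real.pi, (1 + (t - Real.pi/2)^2) = Real.pi + Real.pi^3/12 := by
    rw [← integral_Ioc_eq_integral_Ioo, ← intervalIntegral.integral_of_le Real.pi_pos.le]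
    have hadd : ∫ t in (0:ℝ)..Real.pi, (1 + (t - Real.pi/2)^2)
        = (∫ _ in (0:ℝ)..Real.pi, (1:ℝ)) + ∫ t in (0:ℝ)..Real.pi, (t - Real.pi/2)^2 :=
      intervalIntegral.integral_add intervalIntegrable_const
        (((continuous_id.sub continuous_const).pow 2).intervalIntegrable _ _)
    rw [hadd, intervalIntegral.integral_const,
      intervalIntegral.integral_comp_sub_right (fun u => u^2) (Real.pi/2), integral_pow]
    simp
    ring
  have e3 : ∫ r in Ico δ 1, γ^2/(L^2*r) = γ^2/L := by
    rw [integral_Ico_eq_integral_Ioo, ← integral_Ioc_eq_integral_Ioo,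
      ← intervalIntegral.integral_of_le hδ1.le]
    have hfe : ∀ r : ℝ, γ^2/(L^2*r) = (γ^2/L^2) * r⁻¹ := fun r => by
      rw [div_mul_eq_div_div, div_eq_mul_inv]
    simp_rw [hfe]
    rw [intervalIntegral.integral_const_mul, integral_inv_of_pos hδ0 one_pos, ← hLdef]
    field_simp
  have e4 : ∫ _ in Ioo (0:ℝ) Real.pi, (1:ℝ) = Real.pi := by
    rw [setIntegral_const]
    simp [Real.volume_Ioo, ENNReal.toReal_ofReal Real.pi_pos.le]
    exact Real.pi_pos.le
  rw [e1, e2, e3, e4]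
  field_simp
  ring
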